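/- Let ρ(λ) be a probability density on a measurable space Λ (ρ ≥ 0, ∫ρ dλ = 1), and let A(a,λ), B(b,λ) be measurable functions with |A(a,λ)| ≤ 1 and |B(b,λ)| ≤ 1 for all settings a, b and all λ. Define E(a,b) = ∫ ρ(λ) A(a,λ) B(b,λ) dλ. Then for any settings a, a', b, b': |E(a,b) − E(a,b')| + |E(a',b) + E(a',b')| ≤ 2 (the CHSH inequality). -/

import Mathlib

open MeasureTheory

theorem chsh_inequality
    {Λ Setting : Type*} [MeasurableSpace Λ] (μ : Measure Λ) [SigmaFinite μ]
    (ρ : Λ → ℝ) (hρ_meas : Measurable ρ) (hρ_nonneg : ∀ l, 0 ≤ ρ l)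
    (hρ_int : Integrable ρ μ) (hρ_one : ∫ l, ρ l ∂μ = 1)
    (A B : Setting → Λ → ℝ)
    (hA_meas : ∀ a, Measurable (A a)) (hB_meas : ∀ b, Measurable (B b))
    (hA : ∀ a l, |A a l| ≤ 1) (hB : ∀ b l, |B b l| ≤ 1)
    (E : Setting → Setting → ℝ)
    (hE : ∀ a b, E a b = ∫ l, ρ l * A a l * B b l ∂μ)
    (a a' b b' : Setting) :
    |E a b - E a b'| + |E a' b + E a' b'| ≤ 2 := by
  have hint : ∀ x y, Integrable (fun l => ρ l * A x l * B y l) μ := by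
    intro x y
    apply hρ_int.mono ((hρ_meas.mul (hA_meas x)).mul (hB_meas y)).aestronglyMeasurable
    filter_upwards with l
    simp only [Real.norm_eq_abs, Pi.mul_apply, abs_mul, abs_of_nonneg (hρ_nonneg l)]
    have h1 : |A x l| * |B y l| ≤ 1 := mul_le_one₀ (hA x l) (abs_nonneg _) (hB y l)
    calc ρ l * |A x l| * |B y l| = ρ l * (|A x l| * |B y l|) := by ring
      _ ≤ ρ l * 1 := mul_le_mul_of_nonneg_left h1 (hρ_nonneg l)
      _ = ρ l := mul_one _
  set f : Λ → ℝ := fun l => ρ l * A a l * (B b l - B b' l) with hfdef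
  set g : Λ → ℝ := fun l => ρ l * A a' l * (B b l + B b' l) with hgdef
  have hf : Integrable f μ := by
    apply ((hint a b).sub (hint a b')).congr
    filter_upwards with l; simp [hfdef]; ring
  have hg : Integrable g μ := by
    apply ((hint a' b).add (hint a' b')).congr
    filter_upwards with l; simp [hgdef]; ring
  have h1 : E a b - E a b' = ∫ l, f l ∂μ := by
    rw [hE, hE, ← integral_sub (hint a b) (hint a b')]
    congr 1; ext l; simp [hfdef]; ring
  have h2 : E a' b + E a' b' = ∫ l, g l ∂μ := by
    rw [hE, hE, ← integral_add (hint a' b) (hint a' b')]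
    congr 1; ext l; simp [hgdef]; ring
  rw [h1, h2]
  have hptw : ∀ l, |f l| + |g l| ≤ 2 * ρ l := by
    intro l
    have hρl := hρ_nonneg l
    have hAa := abs_le.mp (hA a l)
    have hAa' := abs_le.mp (hA a' l)
    have hBb := abs_le.mp (hB b l)
    have hBb' := abs_le.mp (hB b' l)
    have hu : |B b l - B b' l| + |B b l + B b' l| ≤ 2 := by
      rcases abs_cases (B b l - B b' l) with ⟨h, _⟩ | ⟨h, _⟩ <;>
      rcases abs_cases (B b l + B b' l) with ⟨h', _⟩ | ⟨h', _⟩ <;>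
      rw [h, h'] <;> linarith [hBb.1, hBb.2, hBb'.1, hBb'.2]
    have hfb : |f l| ≤ ρ l * |B b l - B b' l| := by
      simp only [hfdef, abs_mul, abs_of_nonneg hρl]
      nlinarith [mul_nonneg (mul_nonneg hρl (abs_nonneg (B b l - B b' l)))
        (sub_nonneg.mpr (hA a l)), abs_nonneg (A a l)]
    have hgb : |g l| ≤ ρ l * |B b l + B b' l| := by
      simp only [hgdef, abs_mul, abs_of_nonneg hρl]
      nlinarith [mul_nonneg (mul_nonneg hρl (abs_nonneg (B b l + B b' l)))
        (sub_nonneg.mpr (hA a' l)), abs_nonneg (A a' l)]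
    nlinarith [hfb, hgb, hu, hρl, abs_nonneg (f l), abs_nonneg (g l)]
  calc |∫ l, f l ∂μ| + |∫ l, g l ∂μ|
      ≤ (∫ l, |f l| ∂μ) + ∫ l, |g l| ∂μ := by
        gcongr
        · simpa [Real.norm_eq_abs] using norm_integral_le_integral_norm (μ := μ) f
        · simpa [Real.norm_eq_abs] using norm_integral_le_integral_norm (μ := μ) g
    _ = ∫ l, |f l| + |g l| ∂μ := (integral_add hf.abs hg.abs).symm
    _ ≤ ∫ l, 2 * ρ l ∂μ :=
        integral_mono (hf.abs.add hg.abs) (hρ_int.const_mul 2) hptw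
    _ = 2 := by rw [integral_const_mul, hρ_one, mul_one]
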